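/- Let A be a nonnegative p×p real matrix with no zero column. Then the Birkhoff contraction coefficient satisfies τ(A) = tanh(φ(A)/4), where φ(A) = max_{i,j} h(Aᶜᵢ, Aᶜⱼ) ∈ [0, ∞] is the maximal Hilbert distance between two columns Aᶜᵢ, Aᶜⱼ of A, and tanh(∞/4) is interpreted as 1. In particular, τ(A) < 1 if and only if every row of A is either strictly positive (all entries > 0) or identically zero. -/

import Mathlib

open MeasureTheory Filter Matrix
open scoped ENNReal

/-- `elog x` is the extended-real logarithm of a nonnegative real number,
with `elog x = -∞` for `x ≤ 0`. -/
noncomputable def elog (x : ℝ) : EReal := if x ≤ 0 then ⊥ else ((Real.log x : ℝ) : EReal)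

/-- `Mprod A n = A (n-1) * ⋯ * A 0`, i.e. the product `M_n = A_n A_{n-1} ⋯ A_1`
of the first `n` matrices of the (0-indexed) sequence `A`. -/
def Mprod {p : ℕ} (A : ℕ → Matrix (Fin p) (Fin p) ℝ) : ℕ → Matrix (Fin p) (Fin p) ℝ
  | 0 => 1
  | n + 1 => A n * Mprod A n

/-- Every row of `M` is either strictly positive or identically zero. -/
def RowsPosOrZero {p : ℕ} (M : Matrix (Fin p) (Fin p) ℝ) : Prop :=
  ∀ i, (∀ j, 0 < M i j) ∨ (∀ j, M i j = 0)

/-- `A` is nonnegative and column-allowable: each column contains a strictly positive entry. -/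
def ColAllowable {p : ℕ} (A : Matrix (Fin p) (Fin p) ℝ) : Prop :=
  (∀ i j, 0 ≤ A i j) ∧ ∀ j, ∃ i, 0 < A i j

/-- `M = U * S * V` is a singular value decomposition: `U, V` orthogonal and `S` diagonal
with nonnegative nonincreasing diagonal entries. -/
def IsSVD {p : ℕ} (M U S V : Matrix (Fin p) (Fin p) ℝ) : Prop :=
  Uᵀ * U = 1 ∧ U * Uᵀ = 1 ∧ Vᵀ * V = 1 ∧ V * Vᵀ = 1 ∧
  (∀ i j, i ≠ j → S i j = 0) ∧ (∀ i, 0 ≤ S i i) ∧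
  (∀ i j : Fin p, i ≤ j → S j j ≤ S i i) ∧ M = U * S * V

/-- A norm on matrices (all norms on a finite-dimensional space are equivalent). -/
noncomputable def matNorm {p : ℕ} (M : Matrix (Fin p) (Fin p) ℝ) : ℝ := ∑ i, ∑ j, |M i j|

/-- Total variation norm of a vector: `‖v‖_TV = (1/2) ∑ i |v i|`. -/
noncomputable def tvNorm {p : ℕ} (v : Fin p → ℝ) : ℝ := (1 / 2) * ∑ i, |v i|

/-- `inf{λ ≥ 0 : λ y − x ≥ 0 componentwise}`, computed in `[0,∞]` (so `inf ∅ = ∞`). -/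
noncomputable def hilbertNum {p : ℕ} (x y : Fin p → ℝ) : ℝ≥0∞ :=
  sInf {l : ℝ≥0∞ | ∀ k, ENNReal.ofReal (x k) ≤ l * ENNReal.ofReal (y k)}

/-- `sup{λ ≥ 0 : x − λ y ≥ 0 componentwise}`, computed in `[0,∞]`. -/
noncomputable def hilbertDen {p : ℕ} (x y : Fin p → ℝ) : ℝ≥0∞ :=
  sSup {l : ℝ≥0∞ | ∀ k, l * ENNReal.ofReal (y k) ≤ ENNReal.ofReal (x k)}

/-- The Hilbert (projective) distance of two nonnegative nonzero vectors,
`h(x,y) = log( inf{λ ≥ 0 : λy − x ≥ 0} / sup{λ ≥ 0 : x − λy ≥ 0} ) ∈ [0,∞]`. -/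
noncomputable def hilbertDist {p : ℕ} (x y : Fin p → ℝ) : EReal :=
  ENNReal.log (hilbertNum x y / hilbertDen x y)

/-- The ratio `a / b` of two extended reals in `[0,∞]`, with the convention `∞/∞ = 1`. -/
noncomputable def eratio (a b : EReal) : ℝ≥0∞ :=
  if b = ⊤ then (if a = ⊤ then 1 else 0)
  else if a = ⊤ then ⊤
  else ENNReal.ofReal (a.toReal / b.toReal)

/-- The Birkhoff contraction coefficient
`τ(A) = sup{ h(Ax, Ay)/h(x, y) : x, y nonnegative nonzero, 0 < h(x, y) }`,
with the convention `∞/∞ = 1`. -/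
noncomputable def birkhoffCoeff {p : ℕ} (A : Matrix (Fin p) (Fin p) ℝ) : ℝ≥0∞ :=
  sSup {r : ℝ≥0∞ | ∃ x y : Fin p → ℝ, (∀ i, 0 ≤ x i) ∧ x ≠ 0 ∧ (∀ i, 0 ≤ y i) ∧ y ≠ 0 ∧
    0 < hilbertDist x y ∧
    r = eratio (hilbertDist (A.mulVec x) (A.mulVec y)) (hilbertDist x y)}

/-- `φ(A)`: the maximal Hilbert distance between two columns of `A`, in `[0,∞]`. -/
noncomputable def birkhoffPhi {p : ℕ} (A : Matrix (Fin p) (Fin p) ℝ) : EReal :=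
  ⨆ i : Fin p, ⨆ j : Fin p, hilbertDist (fun r => A r i) (fun r => A r j)

open Filter

/-- single coordinate: fractional linear attains max at an endpoint -/
lemma frac_endpoint (α β u v m M t : ℝ) (hα : 0 ≤ α) (hβ : 0 ≤ β) (hu : 0 ≤ u) (hv : 0 ≤ v)
    (h1 : m ≤ t) (h2 : t ≤ M) :
    (α + u*t)*(β + v*M) ≤ (β + v*t)*(α + u*M) ∨
    (α + u*t)*(β + v*m) ≤ (β + v*t)*(α + u*m) := by
  rcases le_total (α*v) (u*β) with h | h
  · left; nlinarith [mul_nonneg hu hv, sub_nonneg.2 h2]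
  · right; nlinarith [mul_nonneg hu hv, sub_nonneg.2 h1]

/-- pointwise derivative bound -/
lemma deriv_bound (E bu cu bv cv s : ℝ) (hE : 1 ≤ E) (hbu : 0 < bu) (hcu : 0 < cu)
    (hbv : 0 < bv) (hcv : 0 < cv) (hs : 0 < s) (hcross : bu * cv ≤ E^2 * (bv * cu)) :
    bu*s/(bu*s+cu) - bv*s/(bv*s+cv) ≤ (E-1)/(E+1) := by
  have d1 : 0 < bu*s+cu := by positivity
  have d2 : 0 < bv*s+cv := by positivity
  have d3 : 0 < E+1 := by linarith
  rw [div_sub_div _ _ (ne_of_gt d1) (ne_of_gt d2), div_le_div_iff₀ (by positivity) d3]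
  set a := Real.sqrt (bu*cv) with ha
  set b := Real.sqrt (bv*cu) with hb
  have ha2 : a^2 = bu*cv := Real.sq_sqrt (by positivity)
  have hb2 : b^2 = bv*cu := Real.sq_sqrt (by positivity)
  have hapos : 0 < a := Real.sqrt_pos.2 (by positivity)
  have hbpos : 0 < b := Real.sqrt_pos.2 (by positivity)
  have haE : a ≤ E*b := by
    have h := Real.sqrt_le_sqrt hcross
    rwa [Real.sqrt_mul (by positivity) (bv*cu), Real.sqrt_sq (by linarith : (0:ℝ) ≤ E), ← hb] at h
  -- AM-GM : bu*bv*s^2 + cu*cv ≥ 2*a*b*s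
  have hsq : Real.sqrt (bu*bv) * Real.sqrt (cu*cv) = a*b := by
    rw [ha, hb, ← Real.sqrt_mul (by positivity), ← Real.sqrt_mul (by positivity)]
    ring_nf
  have hamgm : 2*(a*b)*s ≤ bu*bv*s^2 + cu*cv := by
    have h1 : Real.sqrt (bu*bv)^2 = bu*bv := Real.sq_sqrt (by positivity)
    have h2 : Real.sqrt (cu*cv)^2 = cu*cv := Real.sq_sqrt (by positivity)
    nlinarith [sq_nonneg (Real.sqrt (bu*bv)*s - Real.sqrt (cu*cv))]
  -- key : (E+1)*(a^2-b^2) ≤ (E-1)*(a+b)^2  follows from a ≤ E*b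
  have hkey : (E+1)*(a^2-b^2) ≤ (E-1)*((a+b)^2) := by
    nlinarith [mul_nonneg (sub_nonneg.2 haE) (by positivity : (0:ℝ) ≤ a+b)]
  have e1 : (bu*s*(bv*s+cv) - (bu*s+cu)*(bv*s))*(E+1) = (E+1)*(a^2-b^2)*s := by
    rw [ha2, hb2]; ring
  have e2 : (E-1)*((bu*s+cu)*(bv*s+cv)) = (E-1)*(bu*bv*s^2+cu*cv) + (E-1)*(a^2+b^2)*s := by
    rw [ha2, hb2]; ring
  have e3 : (E-1)*((a+b)^2)*s = (E-1)*(2*(a*b)*s) + (E-1)*(a^2+b^2)*s := by ring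
  have h4 := mul_le_mul_of_nonneg_right hkey hs.le
  have h5 := mul_le_mul_of_nonneg_left hamgm (by linarith : (0:ℝ) ≤ E-1)
  linarith [e1, e2, e3, h4, h5]


lemma chain_ineq (X1 Y1 X2 Y2 U V : ℝ) (h1 : X1*Y2 ≤ Y1*X2) (h2 : X2*V ≤ Y2*U)
    (hY2 : 0 < Y2) (hV : 0 ≤ V) (hY1 : 0 ≤ Y1) : X1*V ≤ Y1*U := by
  have ha := mul_le_mul_of_nonneg_right h1 hV
  have hb := mul_le_mul_of_nonneg_left h2 hY1
  have h3 : X1*V*Y2 ≤ Y1*U*Y2 := by nlinarith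
  exact le_of_mul_le_mul_right h3 hY2

/-- vertex lemma: the ratio of two nonneg linear forms on a box is maximized at a vertex -/
lemma vertex_lemma {ι : Type*} [DecidableEq ι] (m M : ℝ) (hm : 0 < m)
    (u v t : ι → ℝ) :
    ∀ (S : Finset ι), (∀ k ∈ S, 0 ≤ u k) → (∀ k ∈ S, 0 ≤ v k) →
    (∀ k ∈ S, m ≤ t k ∧ t k ≤ M) →
    ∀ (A B : ℝ), 0 ≤ A → 0 ≤ B → 0 < B + ∑ k ∈ S, v k * t k →
    ∃ P ⊆ S, (A + ∑ k ∈ S, u k * t k) * (B + (∑ k ∈ P, v k * M) + ∑ k ∈ S \ P, v k * m)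
      ≤ (B + ∑ k ∈ S, v k * t k) * (A + (∑ k ∈ P, u k * M) + ∑ k ∈ S \ P, u k * m) := by
  intro S
  induction S using Finset.induction_on with
  | empty =>
    intro _ _ _ A B _ _ _
    exact ⟨∅, Finset.Subset.refl _, by simp; ring_nf; exact le_refl _⟩
  | @insert a S ha ih =>
    intro hu hv ht A B hA hB hpos
    have hua : 0 ≤ u a := hu a (Finset.mem_insert_self a S)
    have hva : 0 ≤ v a := hv a (Finset.mem_insert_self a S)
    have hta := ht a (Finset.mem_insert_self a S)
    have hM0 : 0 < M := lt_of_lt_of_le hm (le_trans hta.1 hta.2)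
    have hu' : ∀ k ∈ S, 0 ≤ u k := fun k hk => hu k (Finset.mem_insert_of_mem hk)
    have hv' : ∀ k ∈ S, 0 ≤ v k := fun k hk => hv k (Finset.mem_insert_of_mem hk)
    have ht' : ∀ k ∈ S, m ≤ t k ∧ t k ≤ M := fun k hk => ht k (Finset.mem_insert_of_mem hk)
    have husum : 0 ≤ ∑ k ∈ S, u k * t k :=
      Finset.sum_nonneg fun k hk => mul_nonneg (hu' k hk) (le_trans hm.le (ht' k hk).1)
    have hsumS' : 0 ≤ ∑ k ∈ S, v k * t k :=
      Finset.sum_nonneg fun k hk => mul_nonneg (hv' k hk) (le_trans hm.le (ht' k hk).1)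
    have hxne : ∀ x ∈ S, x ≠ a := fun x hx h => ha (h ▸ hx)
    rw [Finset.sum_insert ha, Finset.sum_insert ha] at *
    rcases frac_endpoint (A + ∑ k ∈ S, u k * t k) (B + ∑ k ∈ S, v k * t k) (u a) (v a) m M (t a)
        (by positivity) (by positivity) hua hva hta.1 hta.2 with hend | hend
    · -- endpoint M
      have hpos' : 0 < (B + v a * M) + ∑ k ∈ S, v k * t k := by
        rcases eq_or_lt_of_le hva with h0 | h0
        · rw [← h0] at hpos ⊢; linarith
        · have : 0 < v a * M := mul_pos h0 hM0
          linarith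
      obtain ⟨P, hPS, hP⟩ := ih hu' hv' ht' (A + u a * M) (B + v a * M)
        (by positivity) (by positivity) hpos'
      refine ⟨insert a P, Finset.insert_subset_insert a hPS, ?_⟩
      have haP : a ∉ P := fun h => ha (hPS h)
      have hset : insert a S \ insert a P = S \ P := by
        ext x
        simp only [Finset.mem_sdiff, Finset.mem_insert, not_or]
        constructor
        · rintro ⟨h1 | h1, h2, h3⟩
          · exact absurd h1 h2
          · exact ⟨h1, h3⟩
        · rintro ⟨h1, h3⟩; exact ⟨Or.inr h1, hxne x h1, h3⟩
      rw [Finset.sum_insert haP, Finset.sum_insert haP, hset]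
      have hVnn : 0 ≤ B + (v a * M + ∑ k ∈ P, v k * M) + ∑ k ∈ S \ P, v k * m := by
        have h1 : 0 ≤ ∑ k ∈ P, v k * M :=
          Finset.sum_nonneg fun k hk => mul_nonneg (hv' k (hPS hk)) hM0.le
        have h2 : 0 ≤ ∑ k ∈ S \ P, v k * m :=
          Finset.sum_nonneg fun k hk => mul_nonneg (hv' k (Finset.mem_sdiff.1 hk).1) hm.le
        have := mul_nonneg hva hM0.le
        linarith
      have h2' : ((A + u a * M) + ∑ k ∈ S, u k * t k) *
          (B + (v a * M + ∑ k ∈ P, v k * M) + ∑ k ∈ S \ P, v k * m)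
          ≤ ((B + v a * M) + ∑ k ∈ S, v k * t k) *
          (A + (u a * M + ∑ k ∈ P, u k * M) + ∑ k ∈ S \ P, u k * m) := by
        nlinarith [hP]
      have := chain_ineq (A + (u a * t a + ∑ k ∈ S, u k * t k))
        (B + (v a * t a + ∑ k ∈ S, v k * t k))
        ((A + u a * M) + ∑ k ∈ S, u k * t k)
        ((B + v a * M) + ∑ k ∈ S, v k * t k)
        (A + (u a * M + ∑ k ∈ P, u k * M) + ∑ k ∈ S \ P, u k * m)
        (B + (v a * M + ∑ k ∈ P, v k * M) + ∑ k ∈ S \ P, v k * m)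
        (by nlinarith [hend]) h2' hpos' hVnn (by linarith)
      exact this
    · -- endpoint m
      have hpos' : 0 < (B + v a * m) + ∑ k ∈ S, v k * t k := by
        rcases eq_or_lt_of_le hva with h0 | h0
        · rw [← h0] at hpos ⊢; linarith
        · have : 0 < v a * m := mul_pos h0 hm
          linarith
      obtain ⟨P, hPS, hP⟩ := ih hu' hv' ht' (A + u a * m) (B + v a * m)
        (by positivity) (by positivity) hpos'
      refine ⟨P, hPS.trans (Finset.subset_insert a S), ?_⟩
      have haSP : a ∉ S \ P := fun h => ha (Finset.mem_sdiff.1 h).1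
      have haP : a ∉ P := fun h => ha (hPS h)
      have hset : insert a S \ P = insert a (S \ P) := by
        ext x
        simp only [Finset.mem_sdiff, Finset.mem_insert]
        constructor
        · rintro ⟨h1 | h1, h3⟩
          · exact Or.inl h1
          · exact Or.inr ⟨h1, h3⟩
        · rintro (h1 | ⟨h1, h3⟩)
          · exact ⟨Or.inl h1, fun hc => haP (h1 ▸ hc)⟩
          · exact ⟨Or.inr h1, h3⟩
      rw [hset, Finset.sum_insert haSP, Finset.sum_insert haSP]
      have hVnn : 0 ≤ B + (∑ k ∈ P, v k * M) + (v a * m + ∑ k ∈ S \ P, v k * m) := by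
        have h1 : 0 ≤ ∑ k ∈ P, v k * M :=
          Finset.sum_nonneg fun k hk => mul_nonneg (hv' k (hPS hk)) hM0.le
        have h2 : 0 ≤ ∑ k ∈ S \ P, v k * m :=
          Finset.sum_nonneg fun k hk => mul_nonneg (hv' k (Finset.mem_sdiff.1 hk).1) hm.le
        have := mul_nonneg hva hm.le
        linarith
      have h2' : ((A + u a * m) + ∑ k ∈ S, u k * t k) *
          (B + (∑ k ∈ P, v k * M) + (v a * m + ∑ k ∈ S \ P, v k * m))
          ≤ ((B + v a * m) + ∑ k ∈ S, v k * t k) *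
          (A + (∑ k ∈ P, u k * M) + (u a * m + ∑ k ∈ S \ P, u k * m)) := by
        nlinarith [hP]
      have := chain_ineq (A + (u a * t a + ∑ k ∈ S, u k * t k))
        (B + (v a * t a + ∑ k ∈ S, v k * t k))
        ((A + u a * m) + ∑ k ∈ S, u k * t k)
        ((B + v a * m) + ∑ k ∈ S, v k * t k)
        (A + (∑ k ∈ P, u k * M) + (u a * m + ∑ k ∈ S \ P, u k * m))
        (B + (∑ k ∈ P, v k * M) + (v a * m + ∑ k ∈ S \ P, v k * m))
        (by nlinarith [hend]) h2' hpos' hVnn (by linarith)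
      exact this

/-- derivative of h ↦ log (b e^h + c) -/
lemma hasDeriv_logexp (b c h : ℝ) (hpos : 0 < b * Real.exp h + c) :
    HasDerivAt (fun h => Real.log (b * Real.exp h + c))
      (b * Real.exp h / (b * Real.exp h + c)) h := by
  have h1 : HasDerivAt (fun h => b * Real.exp h + c) (b * Real.exp h) h :=
    ((Real.hasDerivAt_exp h).const_mul b).add_const c
  exact h1.log (ne_of_gt hpos)

/-- SL2 : the 2-dimensional tanh bound -/
lemma sl2 (E bu cu bv cv m M : ℝ) (hE : 1 ≤ E)
    (hbu : 0 ≤ bu) (hcu : 0 ≤ cu) (hbv : 0 ≤ bv) (hcv : 0 ≤ cv)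
    (hU : 0 < bu + cu) (hV : 0 < bv + cv) (hm : 0 < m) (hmM : m ≤ M)
    (h1 : bu * cv ≤ E^2 * (bv * cu)) (h2 : cu * bv ≤ E^2 * (cv * bu)) :
    Real.log (M*bu + m*cu) - Real.log (M*bv + m*cv)
      - Real.log (bu+cu) + Real.log (bv+cv)
      ≤ (E-1)/(E+1) * (Real.log M - Real.log m) := by
  have hM : 0 < M := lt_of_lt_of_le hm hmM
  have hE0 : 0 < E + 1 := by linarith
  have hrhs0 : 0 ≤ (E-1)/(E+1) * (Real.log M - Real.log m) := by
    apply mul_nonneg (div_nonneg (by linarith) hE0.le)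
    have := Real.log_le_log hm hmM
    linarith
  -- degenerate cases
  rcases eq_or_lt_of_le hbu with h0u | hbu'
  · -- bu = 0, so cu > 0, and h2 forces bv = 0
    have hcu' : 0 < cu := by rw [← h0u] at hU; linarith
    have hbv0 : bv = 0 := by
      by_contra hne
      have hbvpos : 0 < bv := lt_of_le_of_ne hbv (Ne.symm hne)
      have h2' : cu * bv ≤ 0 := by rw [← h0u] at h2; simpa using h2
      linarith [mul_pos hcu' hbvpos]
    rw [← h0u, hbv0]
    have hcv' : 0 < cv := by rw [hbv0] at hV; linarith
    simp only [zero_mul, mul_zero, zero_add, add_zero]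
    rw [Real.log_mul (ne_of_gt hm) (ne_of_gt hcu'), Real.log_mul (ne_of_gt hm) (ne_of_gt hcv')]
    linarith
  rcases eq_or_lt_of_le hcu with h0u | hcu'
  · -- cu = 0, so bu > 0, h1 forces cv = 0
    have hcv0 : cv = 0 := by
      by_contra hne
      have hpos : 0 < cv := lt_of_le_of_ne hcv (Ne.symm hne)
      have h1' : bu * cv ≤ 0 := by rw [← h0u] at h1; simpa using h1
      linarith [mul_pos hbu' hpos]
    rw [← h0u, hcv0]
    have hbv' : 0 < bv := by rw [hcv0] at hV; linarith
    simp only [zero_mul, mul_zero, zero_add, add_zero]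
    rw [Real.log_mul (ne_of_gt hM) (ne_of_gt hbu'), Real.log_mul (ne_of_gt hM) (ne_of_gt hbv')]
    linarith
  rcases eq_or_lt_of_le hbv with h0v | hbv'
  · exfalso
    have hcv0 : cv = 0 := by
      by_contra hne
      have hpos : 0 < cv := lt_of_le_of_ne hcv (Ne.symm hne)
      have h1' : bu * cv ≤ 0 := by rw [← h0v] at h1; simpa using h1
      linarith [mul_pos hbu' hpos]
    rw [hcv0, ← h0v] at hV; linarith
  rcases eq_or_lt_of_le hcv with h0v | hcv'
  · exfalso
    have hbv0 : bv = 0 := by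
      by_contra hne
      have hpos : 0 < bv := lt_of_le_of_ne hbv (Ne.symm hne)
      have h2' : cu * bv ≤ 0 := by rw [← h0v] at h2; simpa using h2
      linarith [mul_pos hcu' hpos]
    rw [hbv0, ← h0v] at hV; linarith
  -- main case : all positive
  set g : ℝ → ℝ := fun h => Real.log (bu * Real.exp h + cu) - Real.log (bv * Real.exp h + cv)
    with hg
  set g' : ℝ → ℝ := fun h => bu * Real.exp h / (bu * Real.exp h + cu)
    - bv * Real.exp h / (bv * Real.exp h + cv) with hg'
  have hposu : ∀ h : ℝ, 0 < bu * Real.exp h + cu := fun h => by positivity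
  have hposv : ∀ h : ℝ, 0 < bv * Real.exp h + cv := fun h => by positivity
  have hderiv : ∀ h : ℝ, HasDerivAt g (g' h) h := fun h =>
    (hasDeriv_logexp bu cu h (hposu h)).sub (hasDeriv_logexp bv cv h (hposv h))
  set H := Real.log M - Real.log m with hH
  have hH0 : 0 ≤ H := by
    have := Real.log_le_log hm hmM
    linarith
  have hbound : ∀ h : ℝ, ‖g' h‖ ≤ (E-1)/(E+1) := by
    intro h
    have hexp : 0 < Real.exp h := Real.exp_pos h
    rw [Real.norm_eq_abs, abs_le]
    constructor
    · have := deriv_bound E bv cv bu cu (Real.exp h) hE hbv' hcv' hbu' hcu' hexp (by nlinarith)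
      simp only [hg', neg_le_sub_iff_le_add]
      nlinarith [this]
    · exact deriv_bound E bu cu bv cv (Real.exp h) hE hbu' hcu' hbv' hcv' hexp (by nlinarith)
  have key := norm_image_sub_le_of_norm_deriv_le_segment'
    (f := g) (f' := g') (C := (E-1)/(E+1)) (a := 0) (b := H)
    (fun x _ => (hderiv x).hasDerivWithinAt)
    (fun x _ => hbound x) H (Set.right_mem_Icc.2 hH0)
  have hgH : g H = Real.log (M*bu + m*cu) - Real.log m
      - (Real.log (M*bv + m*cv) - Real.log m) := by
    have hexpH : Real.exp H = M / m := by
      rw [hH, ← Real.log_div (ne_of_gt hM) (ne_of_gt hm), Real.exp_log (by positivity)]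
    rw [hg]
    simp only
    rw [hexpH]
    have e1 : bu * (M/m) + cu = (M*bu + m*cu)/m := by field_simp
    have e2 : bv * (M/m) + cv = (M*bv + m*cv)/m := by field_simp
    rw [e1, e2, Real.log_div (by positivity) (ne_of_gt hm),
      Real.log_div (by positivity) (ne_of_gt hm)]
  have hg0 : g 0 = Real.log (bu+cu) - Real.log (bv+cv) := by
    rw [hg]; simp
  rw [Real.norm_eq_abs] at key
  have := abs_le.1 key
  rw [hgH, hg0] at this
  have h3 := this.2
  linarith [h3]

section hilbert

variable {p : ℕ} {x y : Fin p → ℝ}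

lemma num_pos (hx : ∀ k, 0 ≤ x k) (hxne : x ≠ 0) : 0 < hilbertNum x y := by
  obtain ⟨k1, hk1⟩ : ∃ k, 0 < x k := by
    by_contra h
    push_neg at h
    exact hxne (funext fun k => le_antisymm (h k) (hx k))
  have hc : 0 < ENNReal.ofReal (x k1) / ENNReal.ofReal (y k1) :=
    ENNReal.div_pos (by simp [ENNReal.ofReal_pos.2 hk1, ne_of_gt]) ENNReal.ofReal_ne_top
  refine lt_of_lt_of_le hc (le_sInf fun l hl => ?_)
  have := hl k1
  exact ENNReal.div_le_of_le_mul this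

lemma den_lt_top (hy : ∀ k, 0 ≤ y k) (hyne : y ≠ 0) : hilbertDen x y < ⊤ := by
  obtain ⟨k1, hk1⟩ : ∃ k, 0 < y k := by
    by_contra h
    push_neg at h
    exact hyne (funext fun k => le_antisymm (h k) (hy k))
  have hY : ENNReal.ofReal (y k1) ≠ 0 := by simp [ENNReal.ofReal_pos.2 hk1, ne_of_gt]
  have hb : hilbertDen x y ≤ ENNReal.ofReal (x k1) / ENNReal.ofReal (y k1) :=
    sSup_le fun l hl =>
      (ENNReal.le_div_iff_mul_le (Or.inl hY) (Or.inl ENNReal.ofReal_ne_top)).2 (hl k1)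
  exact lt_of_le_of_lt hb (ENNReal.div_lt_top ENNReal.ofReal_ne_top hY)

lemma den_le_num (hy : ∀ k, 0 ≤ y k) (hyne : y ≠ 0) : hilbertDen x y ≤ hilbertNum x y := by
  obtain ⟨k1, hk1⟩ : ∃ k, 0 < y k := by
    by_contra h
    push_neg at h
    exact hyne (funext fun k => le_antisymm (h k) (hy k))
  have hY : ENNReal.ofReal (y k1) ≠ 0 := by simp [ENNReal.ofReal_pos.2 hk1, ne_of_gt]
  refine sSup_le fun l2 hl2 => le_sInf fun l1 hl1 => ?_
  exact (ENNReal.mul_le_mul_iff_left hY ENNReal.ofReal_ne_top).1 ((hl2 k1).trans (hl1 k1))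

lemma hilbertDist_nonneg (hx : ∀ k, 0 ≤ x k) (hxne : x ≠ 0)
    (hy : ∀ k, 0 ≤ y k) (hyne : y ≠ 0) : 0 ≤ hilbertDist x y := by
  rw [hilbertDist]
  rcases eq_or_ne (hilbertDen x y) 0 with h0 | h0
  · rw [h0, ENNReal.div_zero (ne_of_gt (num_pos hx hxne))]
    simp
  · rw [ENNReal.zero_le_log_iff]
    exact (ENNReal.le_div_iff_mul_le (Or.inl h0) (Or.inl (den_lt_top hy hyne).ne)).2
      (by simpa using den_le_num hy hyne)

lemma hilbertNum_eq_sup (hx : ∀ k, 0 ≤ x k) (hy : ∀ k, 0 ≤ y k)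
    (hsupp : ∀ k, 0 < x k ↔ 0 < y k) (S : Finset (Fin p))
    (hS : S = Finset.univ.filter fun k => 0 < x k) (hne : S.Nonempty) :
    hilbertNum x y = ENNReal.ofReal (S.sup' hne fun k => x k / y k) := by
  have hmemS : ∀ k, k ∈ S ↔ 0 < x k := by intro k; rw [hS]; simp
  obtain ⟨k0, hk0S, hk0⟩ := Finset.exists_mem_eq_sup' hne (fun k => x k / y k)
  have hMpos : 0 < S.sup' hne fun k => x k / y k := by
    rw [hk0]
    have hx0 := (hmemS k0).1 hk0S
    have hy0 := (hsupp k0).1 hx0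
    positivity
  apply le_antisymm
  · apply sInf_le
    intro k
    by_cases hk : 0 < x k
    · have hyk := (hsupp k).1 hk
      rw [← ENNReal.ofReal_mul hMpos.le]
      apply ENNReal.ofReal_le_ofReal
      exact (div_le_iff₀ hyk).1 (Finset.le_sup' (fun k => x k / y k) ((hmemS k).2 hk))
    · have : x k = 0 := le_antisymm (not_lt.1 hk) (hx k)
      simp [this]
  · refine le_sInf fun l hl => ?_
    have hx0 := (hmemS k0).1 hk0S
    have hy0 := (hsupp k0).1 hx0
    have hY : ENNReal.ofReal (y k0) ≠ 0 := by simp [ENNReal.ofReal_pos.2 hy0, ne_of_gt]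
    rw [hk0, ENNReal.ofReal_div_of_pos hy0]
    exact (ENNReal.div_le_iff_le_mul (Or.inl hY) (Or.inl ENNReal.ofReal_ne_top)).2 (hl k0)


lemma hilbertDen_eq_inf (hx : ∀ k, 0 ≤ x k) (hy : ∀ k, 0 ≤ y k)
    (hsupp : ∀ k, 0 < x k ↔ 0 < y k) (S : Finset (Fin p))
    (hS : S = Finset.univ.filter fun k => 0 < x k) (hne : S.Nonempty) :
    hilbertDen x y = ENNReal.ofReal (S.inf' hne fun k => x k / y k) := by
  have hmemS : ∀ k, k ∈ S ↔ 0 < x k := by intro k; rw [hS]; simp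
  obtain ⟨k0, hk0S, hk0⟩ := Finset.exists_mem_eq_inf' hne (fun k => x k / y k)
  have hx0 := (hmemS k0).1 hk0S
  have hy0 := (hsupp k0).1 hx0
  have hmpos : 0 < S.inf' hne fun k => x k / y k := by
    rw [hk0]; positivity
  apply le_antisymm
  · refine sSup_le fun l hl => ?_
    have hY : ENNReal.ofReal (y k0) ≠ 0 := by simp [ENNReal.ofReal_pos.2 hy0, ne_of_gt]
    rw [hk0, ENNReal.ofReal_div_of_pos hy0]
    exact (ENNReal.le_div_iff_mul_le (Or.inl hY) (Or.inl ENNReal.ofReal_ne_top)).2 (hl k0)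
  · apply le_sSup
    intro k
    by_cases hk : 0 < y k
    · have hxk := (hsupp k).2 hk
      rw [← ENNReal.ofReal_mul hmpos.le]
      apply ENNReal.ofReal_le_ofReal
      exact (le_div_iff₀ hk).1 (Finset.inf'_le (fun k => x k / y k) ((hmemS k).2 hxk))
    · have : y k = 0 := le_antisymm (not_lt.1 hk) (hy k)
      simp [this]

lemma hilbertDist_eq (hx : ∀ k, 0 ≤ x k) (hy : ∀ k, 0 ≤ y k)
    (hsupp : ∀ k, 0 < x k ↔ 0 < y k) (S : Finset (Fin p))
    (hS : S = Finset.univ.filter fun k => 0 < x k) (hne : S.Nonempty) :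
    hilbertDist x y = (((Real.log (S.sup' hne fun k => x k / y k)
      - Real.log (S.inf' hne fun k => x k / y k) : ℝ)) : EReal) := by
  have hmemS : ∀ k, k ∈ S ↔ 0 < x k := by intro k; rw [hS]; simp
  obtain ⟨k0, hk0S, hk0⟩ := Finset.exists_mem_eq_inf' hne (fun k => x k / y k)
  obtain ⟨k1, hk1S, hk1⟩ := Finset.exists_mem_eq_sup' hne (fun k => x k / y k)
  have hmpos : 0 < S.inf' hne fun k => x k / y k := by
    rw [hk0]
    have hx0 := (hmemS k0).1 hk0S
    have hy0 := (hsupp k0).1 hx0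
    positivity
  have hMpos : 0 < S.sup' hne fun k => x k / y k := by
    rw [hk1]
    have hx0 := (hmemS k1).1 hk1S
    have hy0 := (hsupp k1).1 hx0
    positivity
  rw [hilbertDist, hilbertNum_eq_sup hx hy hsupp S hS hne,
    hilbertDen_eq_inf hx hy hsupp S hS hne,
    ← ENNReal.ofReal_div_of_pos hmpos, ENNReal.log_ofReal_of_pos (by positivity),
    Real.log_div (ne_of_gt hMpos) (ne_of_gt hmpos)]

lemma hilbertDist_top (hx : ∀ k, 0 ≤ x k) (hxne : x ≠ 0) (hy : ∀ k, 0 ≤ y k) (hyne : y ≠ 0)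
    (hdiff : ∃ k, (0 < x k ∧ ¬ 0 < y k) ∨ (0 < y k ∧ ¬ 0 < x k)) :
    hilbertDist x y = ⊤ := by
  obtain ⟨k, hk | hk⟩ := hdiff
  · have hyk : y k = 0 := le_antisymm (not_lt.1 hk.2) (hy k)
    have hnum : hilbertNum x y = ⊤ := by
      rw [hilbertNum]
      convert sInf_empty
      case e'_2.e'_2 => rfl
      rw [Set.eq_empty_iff_forall_notMem]
      intro l hl
      have := hl k
      rw [hyk] at this
      simp only [ENNReal.ofReal_zero, mul_zero, nonpos_iff_eq_zero] at this
      rw [ENNReal.ofReal_eq_zero] at this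
      linarith [hk.1]
    rw [hilbertDist, hnum, ENNReal.top_div_of_ne_top (den_lt_top hy hyne).ne]
    simp
  · have hxk : x k = 0 := le_antisymm (not_lt.1 hk.2) (hx k)
    have hden : hilbertDen x y = 0 := by
      rw [hilbertDen]
      refine le_antisymm (sSup_le fun l hl => ?_) zero_le
      have := hl k
      rw [hxk] at this
      simp only [ENNReal.ofReal_zero, nonpos_iff_eq_zero, mul_eq_zero] at this
      rcases this with h | h
      · exact le_of_eq h
      · exact absurd h (ENNReal.ofReal_pos.2 hk.1).ne'
    rw [hilbertDist, hden, ENNReal.div_zero (ne_of_gt (num_pos hx hxne))]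
    simp

end hilbert

section contraction

open Matrix

variable {p : ℕ} (A : Matrix (Fin p) (Fin p) ℝ) {x y : Fin p → ℝ}

lemma mulVec_apply' (x : Fin p → ℝ) (i : Fin p) : A.mulVec x i = ∑ k, A i k * x k := by
  simp [Matrix.mulVec, dotProduct]

lemma mulVec_nonneg (hA : ∀ i j, 0 ≤ A i j) (hx : ∀ k, 0 ≤ x k) (i : Fin p) :
    0 ≤ A.mulVec x i := by
  rw [mulVec_apply']
  exact Finset.sum_nonneg fun k _ => mul_nonneg (hA i k) (hx k)

lemma mulVec_pos_iff (hA : ∀ i j, 0 ≤ A i j) (hx : ∀ k, 0 ≤ x k) (i : Fin p) :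
    0 < A.mulVec x i ↔ ∃ k, 0 < A i k ∧ 0 < x k := by
  rw [mulVec_apply']
  constructor
  · intro h
    by_contra hc
    push_neg at hc
    have : ∀ k ∈ Finset.univ, A i k * x k = 0 := by
      intro k _
      rcases lt_or_eq_of_le (hA i k) with h1 | h1
      · have := hc k h1
        have : x k = 0 := le_antisymm this (hx k)
        rw [this, mul_zero]
      · rw [← h1, zero_mul]
    rw [Finset.sum_congr rfl this] at h
    simp at h
  · rintro ⟨k, hk1, hk2⟩
    apply Finset.sum_pos' (fun k _ => mul_nonneg (hA i k) (hx k))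
    exact ⟨k, Finset.mem_univ k, mul_pos hk1 hk2⟩

lemma mulVec_ne_zero (hA : ∀ i j, 0 ≤ A i j) (hcol : ∀ j, ∃ i, 0 < A i j)
    (hx : ∀ k, 0 ≤ x k) (hxne : x ≠ 0) : A.mulVec x ≠ 0 := by
  obtain ⟨k1, hk1⟩ : ∃ k, 0 < x k := by
    by_contra h
    push_neg at h
    exact hxne (funext fun k => le_antisymm (h k) (hx k))
  obtain ⟨i, hi⟩ := hcol k1
  intro h
  have := (mulVec_pos_iff A hA hx i).2 ⟨k1, hi, hk1⟩
  rw [h] at this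
  simp at this

lemma contraction (hA : ∀ i j, 0 ≤ A i j) (hx : ∀ k, 0 ≤ x k) (hy : ∀ k, 0 ≤ y k) :
    hilbertDist (A.mulVec x) (A.mulVec y) ≤ hilbertDist x y := by
  have hnum : hilbertNum (A.mulVec x) (A.mulVec y) ≤ hilbertNum x y := by
    apply sInf_le_sInf
    intro l hl i
    rcases eq_or_ne l ⊤ with rfl | hlt
    · rcases eq_or_lt_of_le (mulVec_nonneg A hA hy i) with h0 | h0
      · -- (Ay) i = 0 : show (Ax) i = 0
        rcases eq_or_lt_of_le (mulVec_nonneg A hA hx i) with h0x | h0x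
        · simp [← h0x]
        · obtain ⟨k, hk1, hk2⟩ := (mulVec_pos_iff A hA hx i).1 h0x
          have hyk : 0 < y k := by
            by_contra hyc
            have hyk0 : y k = 0 := le_antisymm (not_lt.1 hyc) (hy k)
            have := hl k
            rw [hyk0] at this
            simp only [ENNReal.ofReal_zero, mul_zero, nonpos_iff_eq_zero,
              ENNReal.ofReal_eq_zero] at this
            linarith
          exact absurd ((mulVec_pos_iff A hA hy i).2 ⟨k, hk1, hyk⟩) (by rw [← h0]; simp)
      · rw [ENNReal.top_mul (by simp [ENNReal.ofReal_pos.2 h0, ne_of_gt])]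
        exact le_top
    · have hll : l = ENNReal.ofReal l.toReal := (ENNReal.ofReal_toReal hlt).symm
      have hlam : ∀ k, x k ≤ l.toReal * y k := by
        intro k
        have := hl k
        rw [hll, ← ENNReal.ofReal_mul ENNReal.toReal_nonneg] at this
        exact (ENNReal.ofReal_le_ofReal_iff (mul_nonneg ENNReal.toReal_nonneg (hy k))).1 this
      rw [hll, ← ENNReal.ofReal_mul ENNReal.toReal_nonneg]
      apply ENNReal.ofReal_le_ofReal
      rw [mulVec_apply', mulVec_apply', Finset.mul_sum]
      apply Finset.sum_le_sum
      intro k _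
      calc A i k * x k ≤ A i k * (l.toReal * y k) :=
            mul_le_mul_of_nonneg_left (hlam k) (hA i k)
        _ = l.toReal * (A i k * y k) := by ring
  have hden : hilbertDen x y ≤ hilbertDen (A.mulVec x) (A.mulVec y) := by
    apply sSup_le_sSup
    intro l hl i
    rcases eq_or_ne l ⊤ with rfl | hlt
    · have hy0 : ∀ k, y k = 0 := by
        intro k
        by_contra hc
        have hyk : 0 < y k := lt_of_le_of_ne (hy k) (Ne.symm hc)
        have := hl k
        rw [ENNReal.top_mul (by simp [ENNReal.ofReal_pos.2 hyk, ne_of_gt])] at this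
        exact absurd this (by simp)
      have : A.mulVec y i = 0 := by
        rw [mulVec_apply']
        apply Finset.sum_eq_zero
        intro k _
        rw [hy0 k, mul_zero]
      rw [this]
      simp
    · have hll : l = ENNReal.ofReal l.toReal := (ENNReal.ofReal_toReal hlt).symm
      have hlam : ∀ k, l.toReal * y k ≤ x k := by
        intro k
        have := hl k
        rw [hll, ← ENNReal.ofReal_mul ENNReal.toReal_nonneg] at this
        exact (ENNReal.ofReal_le_ofReal_iff (hx k)).1 this
      rw [hll, ← ENNReal.ofReal_mul ENNReal.toReal_nonneg]
      apply ENNReal.ofReal_le_ofReal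
      rw [mulVec_apply', mulVec_apply', Finset.mul_sum]
      apply Finset.sum_le_sum
      intro k _
      calc l.toReal * (A i k * y k) = A i k * (l.toReal * y k) := by ring
        _ ≤ A i k * x k := mul_le_mul_of_nonneg_left (hlam k) (hA i k)
  rw [hilbertDist, hilbertDist]
  exact ENNReal.log_monotone (ENNReal.div_le_div hnum hden)

end contraction

section phi

open Matrix

variable {p : ℕ} {A : Matrix (Fin p) (Fin p) ℝ}

lemma col_ne_zero (hcol : ∀ j, ∃ i, 0 < A i j) (j : Fin p) : (fun r => A r j) ≠ 0 := by
  obtain ⟨i, hi⟩ := hcol j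
  intro h
  have := congrFun h i
  simp only [Pi.zero_apply] at this
  rw [this] at hi
  exact lt_irrefl 0 hi

lemma dist_le_phi (i j : Fin p) :
    hilbertDist (fun r => A r i) (fun r => A r j) ≤ birkhoffPhi A :=
  le_trans (le_iSup (fun j => hilbertDist (fun r => A r i) (fun r => A r j)) j)
    (le_iSup (fun i => ⨆ j, hilbertDist (fun r => A r i) (fun r => A r j)) i)

lemma phi_attained (hp : 0 < p) :
    ∃ i j, birkhoffPhi A = hilbertDist (fun r => A r i) (fun r => A r j) := by
  haveI : Nonempty (Fin p) := ⟨⟨0, hp⟩⟩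
  obtain ⟨⟨i, j⟩, hmax⟩ := Finite.exists_max
    (fun q : Fin p × Fin p => hilbertDist (fun r => A r q.1) (fun r => A r q.2))
  exact ⟨i, j, le_antisymm (iSup_le fun i' => iSup_le fun j' => hmax (i', j'))
    (dist_le_phi i j)⟩

lemma phi_nonneg (hp : 0 < p) (hnn : ∀ i j, 0 ≤ A i j) (hcol : ∀ j, ∃ i, 0 < A i j) :
    0 ≤ birkhoffPhi A := by
  have j0 : Fin p := ⟨0, hp⟩
  exact le_trans (hilbertDist_nonneg (fun r => hnn r j0) (col_ne_zero hcol j0)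
    (fun r => hnn r j0) (col_ne_zero hcol j0)) (dist_le_phi j0 j0)

lemma cols_supp_of_phi_ne_top (hnn : ∀ i j, 0 ≤ A i j) (hcol : ∀ j, ∃ i, 0 < A i j)
    (hphi : birkhoffPhi A ≠ ⊤) : ∀ k l i, 0 < A i k ↔ 0 < A i l := by
  intro k l i
  by_contra hc
  have hdiff : ∃ r, (0 < A r k ∧ ¬ 0 < A r l) ∨ (0 < A r l ∧ ¬ 0 < A r k) := by
    by_cases h1 : 0 < A i k
    · exact ⟨i, Or.inl ⟨h1, fun h2 => hc ⟨fun _ => h2, fun _ => h1⟩⟩⟩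
    · by_cases h2 : 0 < A i l
      · exact ⟨i, Or.inr ⟨h2, h1⟩⟩
      · exact absurd ⟨fun h => absurd h h1, fun h => absurd h h2⟩ hc
  have := hilbertDist_top (fun r => hnn r k) (col_ne_zero hcol k)
    (fun r => hnn r l) (col_ne_zero hcol l) hdiff
  exact hphi (top_le_iff.1 (this ▸ dist_le_phi k l))

lemma rows_of_phi_ne_top (hnn : ∀ i j, 0 ≤ A i j) (hcol : ∀ j, ∃ i, 0 < A i j)
    (hphi : birkhoffPhi A ≠ ⊤) : RowsPosOrZero A := by
  intro i
  by_cases h : ∃ k, 0 < A i k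
  · obtain ⟨k, hk⟩ := h
    exact Or.inl fun j => (cols_supp_of_phi_ne_top hnn hcol hphi k j i).1 hk
  · push_neg at h
    exact Or.inr fun j => le_antisymm (h j) (hnn i j)

lemma phi_ne_top_of_rows (hp : 0 < p) (hnn : ∀ i j, 0 ≤ A i j)
    (hcol : ∀ j, ∃ i, 0 < A i j) (hrows : RowsPosOrZero A) : birkhoffPhi A ≠ ⊤ := by
  obtain ⟨i, j, hphi⟩ := phi_attained (A := A) hp
  rw [hphi]
  have hsupp : ∀ r, 0 < A r i ↔ 0 < A r j := by
    intro r
    rcases hrows r with h | h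
    · exact ⟨fun _ => h j, fun _ => h i⟩
    · constructor <;> intro hh <;> [rw [h i] at hh; rw [h j] at hh] <;> exact absurd hh (lt_irrefl 0)
  obtain ⟨r0, hr0⟩ := hcol i
  have hne : (Finset.univ.filter fun r => 0 < A r i).Nonempty :=
    ⟨r0, by simp [hr0]⟩
  rw [hilbertDist_eq (fun r => hnn r i) (fun r => hnn r j) hsupp _ rfl hne]
  exact EReal.coe_ne_top _

lemma cross_bound (hnn : ∀ i j, 0 ≤ A i j) (hcol : ∀ j, ∃ i, 0 < A i j)
    (hphi : birkhoffPhi A ≠ ⊤) (i j k l : Fin p) :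
    A i k * A j l ≤ Real.exp (birkhoffPhi A).toReal * (A j k * A i l) := by
  have hsupp := cols_supp_of_phi_ne_top hnn hcol hphi
  rcases eq_or_lt_of_le (hnn i k) with h0 | hik
  · rw [← h0, zero_mul]
    exact mul_nonneg (Real.exp_pos _).le (mul_nonneg (hnn j k) (hnn i l))
  rcases eq_or_lt_of_le (hnn j l) with h0 | hjl
  · rw [← h0, mul_zero]
    exact mul_nonneg (Real.exp_pos _).le (mul_nonneg (hnn j k) (hnn i l))
  have hil : 0 < A i l := (hsupp k l i).1 hik
  have hjk : 0 < A j k := (hsupp l k j).1 hjl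
  -- use hilbertDist between columns k and l
  have hne : (Finset.univ.filter fun r => 0 < A r k).Nonempty := ⟨i, by simp [hik]⟩
  set S := Finset.univ.filter fun r => 0 < A r k with hS
  have hd := hilbertDist_eq (fun r => hnn r k) (fun r => hnn r l) (fun r => hsupp k l r)
    S rfl hne
  have hmem : ∀ r, r ∈ S ↔ 0 < A r k := by intro r; rw [hS]; simp
  set f := fun r => A r k / A r l with hf
  obtain ⟨r1, hr1S, hr1⟩ := Finset.exists_mem_eq_sup' hne f
  obtain ⟨r0, hr0S, hr0⟩ := Finset.exists_mem_eq_inf' hne f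
  have hMpos : 0 < S.sup' hne f := by
    rw [hr1, hf]
    have h1 := (hmem r1).1 hr1S
    have h2 := (hsupp k l r1).1 h1
    positivity
  have hmpos : 0 < S.inf' hne f := by
    rw [hr0, hf]
    have h1 := (hmem r0).1 hr0S
    have h2 := (hsupp k l r0).1 h1
    positivity
  have hD : Real.log (S.sup' hne f) - Real.log (S.inf' hne f) ≤ (birkhoffPhi A).toReal := by
    have h1 := dist_le_phi (A := A) k l
    rw [hd] at h1
    have hphib : birkhoffPhi A ≠ ⊥ := by
      intro hb
      rw [hb] at h1
      exact (EReal.coe_ne_bot _) (le_bot_iff.1 h1)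
    rw [← EReal.coe_toReal hphi hphib] at h1
    exact_mod_cast h1
  have hratio : S.sup' hne f / S.inf' hne f ≤ Real.exp (birkhoffPhi A).toReal := by
    calc S.sup' hne f / S.inf' hne f
        = Real.exp (Real.log (S.sup' hne f) - Real.log (S.inf' hne f)) := by
          rw [Real.exp_sub, Real.exp_log hMpos, Real.exp_log hmpos]
      _ ≤ _ := Real.exp_le_exp.2 hD
  have hb1 : A i k ≤ S.sup' hne f * A i l := by
    have := Finset.le_sup' f ((hmem i).2 hik)
    rw [hf] at this
    exact (div_le_iff₀ hil).1 this
  have hb2 : S.inf' hne f * A j l ≤ A j k := by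
    have := Finset.inf'_le f ((hmem j).2 hjk)
    rw [hf] at this
    exact (le_div_iff₀ hjl).1 this
  calc A i k * A j l ≤ (S.sup' hne f * A i l) * A j l :=
        mul_le_mul_of_nonneg_right hb1 hjl.le
    _ = (S.sup' hne f / S.inf' hne f) * (A i l * (S.inf' hne f * A j l)) := by
        field_simp
    _ ≤ (S.sup' hne f / S.inf' hne f) * (A i l * A j k) := by
        apply mul_le_mul_of_nonneg_left _ (by positivity)
        exact mul_le_mul_of_nonneg_left hb2 hil.le
    _ ≤ Real.exp (birkhoffPhi A).toReal * (A j k * A i l) := by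
        rw [mul_comm (A i l) (A j k)] at *
        exact mul_le_mul_of_nonneg_right hratio (by positivity)
end phi

section upper

open Matrix

variable {p : ℕ} {A : Matrix (Fin p) (Fin p) ℝ} {x y : Fin p → ℝ}

lemma exists_pos_of_ne (hx : ∀ k, 0 ≤ x k) (hxne : x ≠ 0) : ∃ k, 0 < x k := by
  by_contra h
  push_neg at h
  exact hxne (funext fun k => le_antisymm (h k) (hx k))

lemma supp_eq_of_dist_ne_top (hx : ∀ k, 0 ≤ x k) (hxne : x ≠ 0) (hy : ∀ k, 0 ≤ y k)
    (hyne : y ≠ 0) (hbfin : hilbertDist x y ≠ ⊤) : ∀ k, 0 < x k ↔ 0 < y k := by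
  intro k
  by_contra hc
  by_cases h1 : 0 < x k
  · by_cases h2 : 0 < y k
    · exact hc ⟨fun _ => h2, fun _ => h1⟩
    · exact hbfin (hilbertDist_top hx hxne hy hyne ⟨k, Or.inl ⟨h1, h2⟩⟩)
  · by_cases h2 : 0 < y k
    · exact hbfin (hilbertDist_top hx hxne hy hyne ⟨k, Or.inr ⟨h2, h1⟩⟩)
    · exact hc ⟨fun h => absurd h h1, fun h => absurd h h2⟩

lemma suppA_eq (hnn : ∀ i j, 0 ≤ A i j) (hrows : RowsPosOrZero A)
    (hx : ∀ k, 0 ≤ x k) (hxne : x ≠ 0) (hy : ∀ k, 0 ≤ y k) (hyne : y ≠ 0) :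
    ∀ i, 0 < A.mulVec x i ↔ 0 < A.mulVec y i := by
  intro i
  rw [mulVec_pos_iff A hnn hx, mulVec_pos_iff A hnn hy]
  constructor
  · rintro ⟨k, hk1, _⟩
    obtain ⟨k1, hk1'⟩ := exists_pos_of_ne hy hyne
    rcases hrows i with h | h
    · exact ⟨k1, h k1, hk1'⟩
    · rw [h k] at hk1; exact absurd hk1 (lt_irrefl 0)
  · rintro ⟨k, hk1, _⟩
    obtain ⟨k1, hk1'⟩ := exists_pos_of_ne hx hxne
    rcases hrows i with h | h
    · exact ⟨k1, h k1, hk1'⟩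
    · rw [h k] at hk1; exact absurd hk1 (lt_irrefl 0)

lemma dist_mulVec_ne_top (hnn : ∀ i j, 0 ≤ A i j) (hcol : ∀ j, ∃ i, 0 < A i j)
    (hrows : RowsPosOrZero A) (hx : ∀ k, 0 ≤ x k) (hxne : x ≠ 0)
    (hy : ∀ k, 0 ≤ y k) (hyne : y ≠ 0) :
    hilbertDist (A.mulVec x) (A.mulVec y) ≠ ⊤ := by
  have hsuppA := suppA_eq hnn hrows hx hxne hy hyne
  obtain ⟨k1, hk1⟩ := exists_pos_of_ne hx hxne
  obtain ⟨i0, hi0⟩ := hcol k1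
  have hRne : (Finset.univ.filter fun i => 0 < A.mulVec x i).Nonempty :=
    ⟨i0, by simp [(mulVec_pos_iff A hnn hx i0).2 ⟨k1, hi0, hk1⟩]⟩
  rw [hilbertDist_eq (mulVec_nonneg A hnn hx) (mulVec_nonneg A hnn hy) hsuppA _ rfl hRne]
  exact EReal.coe_ne_top _

lemma key_quant (hp : 0 < p) (hnn : ∀ i j, 0 ≤ A i j) (hcol : ∀ j, ∃ i, 0 < A i j)
    (hphi : birkhoffPhi A ≠ ⊤) (hx : ∀ k, 0 ≤ x k) (hxne : x ≠ 0)
    (hy : ∀ k, 0 ≤ y k) (hyne : y ≠ 0) (hbfin : hilbertDist x y ≠ ⊤) :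
    (hilbertDist (A.mulVec x) (A.mulVec y)).toReal ≤
      (Real.exp ((birkhoffPhi A).toReal/2) - 1)/(Real.exp ((birkhoffPhi A).toReal/2) + 1)
        * (hilbertDist x y).toReal := by
  have hrows := rows_of_phi_ne_top hnn hcol hphi
  set D := (birkhoffPhi A).toReal with hDdef
  have hphib : birkhoffPhi A ≠ ⊥ := by
    intro h
    have := phi_nonneg (A := A) hp hnn hcol
    rw [h] at this
    simp at this
  have hD0 : 0 ≤ D := by
    have h1 := phi_nonneg (A := A) hp hnn hcol
    rw [← EReal.coe_toReal hphi hphib] at h1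
    exact_mod_cast h1
  set E := Real.exp (D/2) with hEdef
  have hE : 1 ≤ E := Real.one_le_exp (by linarith)
  have hE2 : E^2 = Real.exp D := by
    rw [sq, ← Real.exp_add]
    norm_num
  -- supports of x and y coincide
  have hsupp := supp_eq_of_dist_ne_top hx hxne hy hyne hbfin
  obtain ⟨k1, hk1⟩ := exists_pos_of_ne hx hxne
  have hSne : (Finset.univ.filter fun k => 0 < x k).Nonempty := ⟨k1, by simp [hk1]⟩
  set S := Finset.univ.filter fun k => 0 < x k with hSdef
  have hmemS : ∀ k, k ∈ S ↔ 0 < x k := by intro k; rw [hSdef]; simp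
  have hb := hilbertDist_eq hx hy hsupp S rfl hSne
  set f := fun k => x k / y k with hf
  set Mx := S.sup' hSne f with hMxdef
  set mx := S.inf' hSne f with hmxdef
  obtain ⟨km, hkmS, hkm⟩ := Finset.exists_mem_eq_inf' hSne f
  have hmx : 0 < mx := by
    rw [hmxdef, hkm, hf]
    have h1 := (hmemS km).1 hkmS
    have h2 := (hsupp km).1 h1
    positivity
  have hmxMx : mx ≤ Mx := le_trans (Finset.inf'_le f hkmS) (Finset.le_sup' f hkmS)
  set t := fun k => if 0 < x k then x k / y k else mx with htdef
  have ht : ∀ k, mx ≤ t k ∧ t k ≤ Mx := by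
    intro k
    by_cases hk : 0 < x k
    · simp only [htdef, if_pos hk]
      exact ⟨Finset.inf'_le f ((hmemS k).2 hk), Finset.le_sup' f ((hmemS k).2 hk)⟩
    · simp only [htdef, if_neg hk]
      exact ⟨le_refl _, hmxMx⟩
  have hty : ∀ k, y k * t k = x k := by
    intro k
    by_cases hk : 0 < x k
    · have hyk := (hsupp k).1 hk
      simp only [htdef, if_pos hk, hf]
      field_simp
    · have hxk : x k = 0 := le_antisymm (not_lt.1 hk) (hx k)
      have hyk : y k = 0 := by
        by_contra hc
        exact hk ((hsupp k).2 (lt_of_le_of_ne (hy k) (Ne.symm hc)))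
      simp [htdef, if_neg hk, hxk, hyk]
  -- A-side
  have hsuppA := suppA_eq hnn hrows hx hxne hy hyne
  obtain ⟨i0, hi0⟩ := hcol k1
  have hRne : (Finset.univ.filter fun i => 0 < A.mulVec x i).Nonempty :=
    ⟨i0, by simp [(mulVec_pos_iff A hnn hx i0).2 ⟨k1, hi0, hk1⟩]⟩
  set R := Finset.univ.filter fun i => 0 < A.mulVec x i with hRdef
  have hmemR : ∀ i, i ∈ R ↔ 0 < A.mulVec x i := by intro i; rw [hRdef]; simp
  have ha := hilbertDist_eq (mulVec_nonneg A hnn hx) (mulVec_nonneg A hnn hy) hsuppA R rfl hRne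
  set g := fun i => A.mulVec x i / A.mulVec y i with hg
  obtain ⟨is, hisR, his⟩ := Finset.exists_mem_eq_sup' hRne g
  obtain ⟨js, hjsR, hjs⟩ := Finset.exists_mem_eq_inf' hRne g
  have hxis : 0 < A.mulVec x is := (hmemR is).1 hisR
  have hyis : 0 < A.mulVec y is := (hsuppA is).1 hxis
  have hxjs : 0 < A.mulVec x js := (hmemR js).1 hjsR
  have hyjs : 0 < A.mulVec y js := (hsuppA js).1 hxjs
  rw [ha, hb, EReal.toReal_coe, EReal.toReal_coe, his, hjs, hg]
  simp only
  rw [Real.log_div (ne_of_gt hxis) (ne_of_gt hyis), Real.log_div (ne_of_gt hxjs) (ne_of_gt hyjs)]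
  -- set up u, v
  set u := fun k => A is k * y k with hu
  set v := fun k => A js k * y k with hv
  have hsum_u : A.mulVec y is = ∑ k, u k := by rw [mulVec_apply']
  have hsum_v : A.mulVec y js = ∑ k, v k := by rw [mulVec_apply']
  have hsum_ut : A.mulVec x is = ∑ k, u k * t k := by
    rw [mulVec_apply']
    apply Finset.sum_congr rfl
    intro k _
    rw [hu, ← hty k]
    ring
  have hsum_vt : A.mulVec x js = ∑ k, v k * t k := by
    rw [mulVec_apply']
    apply Finset.sum_congr rfl
    intro k _
    rw [hv, ← hty k]
    ring
  have hunn : ∀ k ∈ Finset.univ, 0 ≤ u k := fun k _ => mul_nonneg (hnn is k) (hy k)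
  have hvnn : ∀ k ∈ Finset.univ, 0 ≤ v k := fun k _ => mul_nonneg (hnn js k) (hy k)
  have hpos0 : 0 < (0:ℝ) + ∑ k, v k * t k := by
    rw [zero_add, ← hsum_vt]
    exact hxjs
  obtain ⟨P, hPuniv, hineq⟩ := vertex_lemma mx Mx hmx u v t Finset.univ hunn hvnn
    (fun k _ => ht k) 0 0 (le_refl 0) (le_refl 0) hpos0
  rw [zero_add, zero_add, zero_add, zero_add] at hineq
  -- convert to bu cu bv cv
  set bu := ∑ k ∈ P, u k with hbu
  set cu := ∑ k ∈ Finset.univ \ P, u k with hcu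
  set bv := ∑ k ∈ P, v k with hbv
  set cv := ∑ k ∈ Finset.univ \ P, v k with hcv
  have hbu0 : 0 ≤ bu := Finset.sum_nonneg fun k hk => hunn k (Finset.mem_univ k)
  have hcu0 : 0 ≤ cu := Finset.sum_nonneg fun k hk => hunn k (Finset.mem_univ k)
  have hbv0 : 0 ≤ bv := Finset.sum_nonneg fun k hk => hvnn k (Finset.mem_univ k)
  have hcv0 : 0 ≤ cv := Finset.sum_nonneg fun k hk => hvnn k (Finset.mem_univ k)
  have hsplit_u : cu + bu = ∑ k, u k := by rw [hcu, hbu]; exact Finset.sum_sdiff hPuniv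
  have hsplit_v : cv + bv = ∑ k, v k := by rw [hcv, hbv]; exact Finset.sum_sdiff hPuniv
  have hU : 0 < bu + cu := by
    rw [add_comm, hsplit_u, ← hsum_u]; exact hyis
  have hV : 0 < bv + cv := by
    rw [add_comm, hsplit_v, ← hsum_v]; exact hyjs
  have hvertU : (∑ k ∈ P, u k * Mx) + ∑ k ∈ Finset.univ \ P, u k * mx = Mx * bu + mx * cu := by
    rw [hbu, hcu, Finset.mul_sum, Finset.mul_sum]
    congr 1 <;> exact Finset.sum_congr rfl fun k _ => mul_comm _ _
  have hvertV : (∑ k ∈ P, v k * Mx) + ∑ k ∈ Finset.univ \ P, v k * mx = Mx * bv + mx * cv := by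
    rw [hbv, hcv, Finset.mul_sum, Finset.mul_sum]
    congr 1 <;> exact Finset.sum_congr rfl fun k _ => mul_comm _ _
  rw [hvertU, hvertV] at hineq
  -- cross bounds
  have hcross := cross_bound hnn hcol hphi
  have hcross_uv : ∀ k l : Fin p, u k * v l ≤ E^2 * (v k * u l) := by
    intro k l
    rw [hE2, hu, hv]
    calc A is k * y k * (A js l * y l) = (A is k * A js l) * (y k * y l) := by ring
      _ ≤ (Real.exp D * (A js k * A is l)) * (y k * y l) := by
          apply mul_le_mul_of_nonneg_right _ (mul_nonneg (hy k) (hy l))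
          exact hcross is js k l
      _ = Real.exp D * (A js k * y k * (A is l * y l)) := by ring
  have hcross1 : bu * cv ≤ E^2 * (bv * cu) := by
    rw [hbu, hcv, hbv, hcu, Finset.sum_mul_sum, Finset.sum_mul_sum, Finset.mul_sum]
    apply Finset.sum_le_sum
    intro k _
    rw [Finset.mul_sum]
    apply Finset.sum_le_sum
    intro l _
    exact hcross_uv k l
  have hcross2 : cu * bv ≤ E^2 * (cv * bu) := by
    rw [hbu, hcv, hbv, hcu, Finset.sum_mul_sum, Finset.sum_mul_sum, Finset.mul_sum]
    apply Finset.sum_le_sum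
    intro k _
    rw [Finset.mul_sum]
    apply Finset.sum_le_sum
    intro l _
    exact hcross_uv k l
  -- positivity of vertex values
  have hvertUpos : 0 < Mx * bu + mx * cu := by
    have h1 : mx * bu ≤ Mx * bu := mul_le_mul_of_nonneg_right hmxMx hbu0
    have h2 : 0 < mx * (bu + cu) := mul_pos hmx hU
    have h3 : mx * (bu + cu) = mx * bu + mx * cu := by ring
    linarith
  have hvertVpos : 0 < Mx * bv + mx * cv := by
    have h1 : mx * bv ≤ Mx * bv := mul_le_mul_of_nonneg_right hmxMx hbv0
    have h2 : 0 < mx * (bv + cv) := mul_pos hmx hV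
    have h3 : mx * (bv + cv) = mx * bv + mx * cv := by ring
    linarith
  -- log step from hineq
  have hlog1 : Real.log (A.mulVec x is) - Real.log (A.mulVec x js)
      ≤ Real.log (Mx * bu + mx * cu) - Real.log (Mx * bv + mx * cv) := by
    rw [← Real.log_div (ne_of_gt hxis) (ne_of_gt hxjs),
      ← Real.log_div (ne_of_gt hvertUpos) (ne_of_gt hvertVpos)]
    apply Real.log_le_log (by positivity)
    rw [div_le_div_iff₀ hxjs hvertVpos]
    rw [hsum_ut, hsum_vt]
    linarith [hineq]
  -- apply sl2
  have hsl2 := sl2 E bu cu bv cv mx Mx hE hbu0 hcu0 hbv0 hcv0 hU hV hmx hmxMx hcross1 hcross2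
  have hlogU : Real.log (A.mulVec y is) = Real.log (bu + cu) := by
    rw [hsum_u, ← hsplit_u, add_comm]
  have hlogV : Real.log (A.mulVec y js) = Real.log (bv + cv) := by
    rw [hsum_v, ← hsplit_v, add_comm]
  rw [hlogU, hlogV]
  linarith [hlog1, hsl2]

end upper

section lower

open Matrix

variable {p : ℕ} {A : Matrix (Fin p) (Fin p) ℝ}

lemma ratio_mono (s s' w w' : ℝ) (hs' : 0 < s') (hss : s' ≤ s) (hw : 0 ≤ w) (hww : w ≤ w') :
    (1 + s * w)/(1 + s' * w) ≤ (1 + s * w')/(1 + s' * w') := by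
  have h1 : 0 < 1 + s' * w := by nlinarith
  have h2 : 0 < 1 + s' * w' := by nlinarith
  rw [div_le_div_iff₀ h1 h2]
  nlinarith

lemma two_point_dist (i0 j0 : Fin p) (hij : i0 ≠ j0) (s s' : ℝ) (hs' : 0 < s') (hss : s' < s) :
    hilbertDist (fun k => (if k = i0 then (1:ℝ) else 0) + s * (if k = j0 then 1 else 0))
      (fun k => (if k = i0 then (1:ℝ) else 0) + s' * (if k = j0 then 1 else 0))
      = ((Real.log (s/s') : ℝ) : EReal) := by
  set x := fun k => (if k = i0 then (1:ℝ) else 0) + s * (if k = j0 then 1 else 0) with hxdef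
  set y := fun k => (if k = i0 then (1:ℝ) else 0) + s' * (if k = j0 then 1 else 0) with hydef
  have hs : 0 < s := lt_trans hs' hss
  have hxv : ∀ k, x k = if k = i0 then 1 else if k = j0 then s else 0 := by
    intro k
    rw [hxdef]
    by_cases h1 : k = i0
    · subst h1; simp [hij]
    · by_cases h2 : k = j0
      · subst h2; simp [Ne.symm hij]
      · simp [h1, h2]
  have hyv : ∀ k, y k = if k = i0 then 1 else if k = j0 then s' else 0 := by
    intro k
    rw [hydef]
    by_cases h1 : k = i0
    · subst h1; simp [hij]
    · by_cases h2 : k = j0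
      · subst h2; simp [Ne.symm hij]
      · simp [h1, h2]
  have hx : ∀ k, 0 ≤ x k := by
    intro k; rw [hxv]
    by_cases h1 : k = i0 <;> by_cases h2 : k = j0 <;> simp [h1, h2] <;> positivity
  have hy : ∀ k, 0 ≤ y k := by
    intro k; rw [hyv]
    by_cases h1 : k = i0 <;> by_cases h2 : k = j0 <;> simp [h1, h2] <;> positivity
  have hsupp : ∀ k, 0 < x k ↔ 0 < y k := by
    intro k; rw [hxv, hyv]
    by_cases h1 : k = i0 <;> by_cases h2 : k = j0 <;> simp [h1, h2, hs, hs', Ne.symm hij]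
  have hS : (Finset.univ.filter fun k => 0 < x k) = {i0, j0} := by
    ext k
    simp only [Finset.mem_filter, Finset.mem_univ, true_and, Finset.mem_insert,
      Finset.mem_singleton]
    rw [hxv]
    by_cases h1 : k = i0 <;> by_cases h2 : k = j0 <;> simp [h1, h2, hs, Ne.symm hij]
  have hne : ({i0, j0} : Finset (Fin p)).Nonempty := ⟨i0, by simp⟩
  have hd := hilbertDist_eq hx hy hsupp {i0, j0} hS.symm hne
  rw [hd]
  have hfi : x i0 / y i0 = 1 := by rw [hxv, hyv]; simp
  have hfj : x j0 / y j0 = s / s' := by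
    rw [hxv, hyv]
    simp [Ne.symm hij]
  have h1s : (1:ℝ) ≤ s/s' := by rw [le_div_iff₀ hs']; linarith
  have hsup : ({i0, j0} : Finset (Fin p)).sup' hne (fun k => x k / y k) = s/s' := by
    apply le_antisymm
    · apply Finset.sup'_le
      intro k hk
      rcases Finset.mem_insert.1 hk with h | h
      · subst h; rw [hfi]; exact h1s
      · rw [Finset.mem_singleton.1 h, hfj]
    · have := Finset.le_sup' (f := fun k => x k / y k)
        (show j0 ∈ ({i0, j0} : Finset (Fin p)) by simp)
      rwa [hfj] at this
  have hinf : ({i0, j0} : Finset (Fin p)).inf' hne (fun k => x k / y k) = 1 := by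
    apply le_antisymm
    · have := Finset.inf'_le (f := fun k => x k / y k)
        (show i0 ∈ ({i0, j0} : Finset (Fin p)) by simp)
      rwa [hfi] at this
    · apply Finset.le_inf'
      intro k hk
      rcases Finset.mem_insert.1 hk with h | h
      · subst h; rw [hfi]
      · rw [Finset.mem_singleton.1 h, hfj]; exact h1s
  rw [hsup, hinf, Real.log_one]
  norm_num

lemma mulVec_two_point (i0 j0 : Fin p) (hij : i0 ≠ j0) (s : ℝ) (r : Fin p) :
    A.mulVec (fun k => (if k = i0 then (1:ℝ) else 0) + s * (if k = j0 then 1 else 0)) r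
      = A r i0 + s * A r j0 := by
  rw [mulVec_apply']
  have : ∀ k, A r k * ((if k = i0 then (1:ℝ) else 0) + s * (if k = j0 then 1 else 0))
      = (if k = i0 then A r k else 0) + s * (if k = j0 then A r k else 0) := by
    intro k
    by_cases h1 : k = i0 <;> by_cases h2 : k = j0 <;>
      simp [h1, h2, hij, Ne.symm hij] <;> ring
  rw [Finset.sum_congr rfl (fun k _ => this k), Finset.sum_add_distrib,
    Finset.sum_ite_eq' Finset.univ i0 (fun k => A r k), ← Finset.mul_sum,
    Finset.sum_ite_eq' Finset.univ j0 (fun k => A r k)]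
  simp

end lower

section lower2

open Matrix Filter Topology
open scoped Topology

variable {p : ℕ} {A : Matrix (Fin p) (Fin p) ℝ}

set_option maxHeartbeats 1000000 in
lemma key_lower (hp : 0 < p) (hnn : ∀ i j, 0 ≤ A i j) (hcol : ∀ j, ∃ i, 0 < A i j)
    (hphi : birkhoffPhi A ≠ ⊤) (hDpos : 0 < (birkhoffPhi A).toReal)
    (ε : ℝ) (hε : 0 < ε) :
    ∃ x y : Fin p → ℝ, (∀ k, 0 ≤ x k) ∧ x ≠ 0 ∧ (∀ k, 0 ≤ y k) ∧ y ≠ 0 ∧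
      0 < hilbertDist x y ∧ hilbertDist x y ≠ ⊤ ∧
      hilbertDist (A.mulVec x) (A.mulVec y) ≠ ⊤ ∧
      ((Real.exp ((birkhoffPhi A).toReal/2) - 1)/(Real.exp ((birkhoffPhi A).toReal/2) + 1) - ε)
        * (hilbertDist x y).toReal ≤ (hilbertDist (A.mulVec x) (A.mulVec y)).toReal := by
  set D := (birkhoffPhi A).toReal with hDdef
  set E := Real.exp (D/2) with hEdef
  set τ := (E - 1)/(E + 1) with hτdef
  obtain ⟨i0, j0, hphiat⟩ := phi_attained (A := A) hp
  have hsuppc : ∀ r, 0 < A r i0 ↔ 0 < A r j0 :=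
    fun r => cols_supp_of_phi_ne_top hnn hcol hphi i0 j0 r
  obtain ⟨ri, hri⟩ := hcol i0
  have hRne : (Finset.univ.filter fun r => 0 < A r i0).Nonempty := ⟨ri, by simp [hri]⟩
  set R := Finset.univ.filter fun r => 0 < A r i0 with hRdef
  have hmemR : ∀ r, r ∈ R ↔ 0 < A r i0 := by intro r; rw [hRdef]; simp
  have hposR : ∀ r ∈ R, 0 < A r i0 ∧ 0 < A r j0 := by
    intro r hr
    have h1 := (hmemR r).1 hr
    exact ⟨h1, (hsuppc r).1 h1⟩
  set ρ := fun r => A r i0 / A r j0 with hρ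
  have hdc := hilbertDist_eq (fun r => hnn r i0) (fun r => hnn r j0) hsuppc R rfl hRne
  set Mρ := R.sup' hRne ρ with hMρ
  set mρ := R.inf' hRne ρ with hmρ
  obtain ⟨rM, hrM, hrMval⟩ := Finset.exists_mem_eq_sup' hRne ρ
  obtain ⟨rm, hrm, hrmval⟩ := Finset.exists_mem_eq_inf' hRne ρ
  have hMρpos : 0 < Mρ := by
    rw [hMρ, hrMval, hρ]
    obtain ⟨h1, h2⟩ := hposR rM hrM
    positivity
  have hmρpos : 0 < mρ := by
    rw [hmρ, hrmval, hρ]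
    obtain ⟨h1, h2⟩ := hposR rm hrm
    positivity
  have hDval : D = Real.log Mρ - Real.log mρ := by
    rw [hDdef, hphiat, hdc, EReal.toReal_coe]
  -- the reciprocal ratios
  set w := fun r => A r j0 / A r i0 with hw
  have hwρ : ∀ r ∈ R, w r = (ρ r)⁻¹ := by
    intro r hr
    show A r j0 / A r i0 = (A r i0 / A r j0)⁻¹
    rw [inv_div]
  set w1 := R.sup' hRne w with hw1def
  set w0 := R.inf' hRne w with hw0def
  have hw1 : w1 = mρ⁻¹ := by
    apply le_antisymm
    · apply Finset.sup'_le
      intro r hr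
      rw [hwρ r hr]
      apply inv_anti₀ hmρpos
      exact Finset.inf'_le ρ hr
    · have h1 : w rm = mρ⁻¹ := by rw [hwρ rm hrm, ← hrmval, hmρ]
      rw [← h1]
      exact Finset.le_sup' w hrm
  have hw0 : w0 = Mρ⁻¹ := by
    apply le_antisymm
    · have h1 : w rM = Mρ⁻¹ := by rw [hwρ rM hrM, ← hrMval, hMρ]
      rw [← h1]
      exact Finset.inf'_le w hrM
    · apply Finset.le_inf'
      intro r hr
      rw [hwρ r hr]
      apply inv_anti₀ (by obtain ⟨h1, h2⟩ := hposR r hr; rw [hρ]; positivity)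
      exact Finset.le_sup' ρ hr
  have hw1pos : 0 < w1 := by rw [hw1]; positivity
  have hw0pos : 0 < w0 := by rw [hw0]; positivity
  have hlogw : Real.log w1 - Real.log w0 = D := by
    rw [hw1, hw0, Real.log_inv, Real.log_inv, hDval]
    ring
  have hwbound : ∀ r ∈ R, w0 ≤ w r ∧ w r ≤ w1 :=
    fun r hr => ⟨Finset.inf'_le w hr, Finset.le_sup' w hr⟩
  -- i0 ≠ j0
  have hij : i0 ≠ j0 := by
    intro h
    subst h
    have h1 : ∀ r ∈ R, ρ r = 1 := by
      intro r hr
      rw [hρ]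
      exact div_self (ne_of_gt ((hmemR r).1 hr))
    have h2 : Mρ = 1 := by
      rw [hMρ, Finset.sup'_congr hRne rfl h1, Finset.sup'_const]
    have h3 : mρ = 1 := by
      rw [hmρ, Finset.inf'_congr hRne rfl h1, Finset.inf'_const]
    rw [hDval, h2, h3] at hDpos
    simp at hDpos
  -- the critical point
  set θs := -(Real.log w1 + Real.log w0)/2 with hθs
  set s' := Real.exp θs with hs'def
  have hs' : 0 < s' := Real.exp_pos _
  have hEw1 : s' * w1 = E := by
    rw [hs'def, ← Real.exp_log hw1pos, ← Real.exp_add, hEdef, ← hlogw]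
    congr 1
    rw [hθs]
    ring
  set E' := Real.exp (-(D/2)) with hE'def
  have hEw0 : s' * w0 = E' := by
    rw [hs'def, ← Real.exp_log hw0pos, ← Real.exp_add, hE'def, ← hlogw]
    congr 1
    rw [hθs]
    ring
  have hEpos : 0 < E := Real.exp_pos _
  have hE'inv : E' = E⁻¹ := by
    apply eq_inv_of_mul_eq_one_right
    rw [hEdef, hE'def, ← Real.exp_add]
    simp
  -- derivative of G at θs equals τ
  set G := fun θ : ℝ => Real.log (1 + Real.exp θ * w1) - Real.log (1 + Real.exp θ * w0)
    with hG
  have hGpos1 : ∀ θ : ℝ, 0 < 1 + Real.exp θ * w1 := fun θ => by positivity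
  have hGpos0 : ∀ θ : ℝ, 0 < 1 + Real.exp θ * w0 := fun θ => by positivity
  have hGderiv : HasDerivAt G τ θs := by
    have d1 : HasDerivAt (fun θ : ℝ => 1 + Real.exp θ * w1) (Real.exp θs * w1) θs :=
      ((Real.hasDerivAt_exp θs).mul_const w1).const_add 1
    have d0 : HasDerivAt (fun θ : ℝ => 1 + Real.exp θ * w0) (Real.exp θs * w0) θs :=
      ((Real.hasDerivAt_exp θs).mul_const w0).const_add 1
    have := (d1.log (ne_of_gt (hGpos1 θs))).sub (d0.log (ne_of_gt (hGpos0 θs)))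
    convert this using 1
    case e'_4 => rfl
    case e'_5 => rfl
    case e'_8 => rfl
    rw [← hs'def] at *
    rw [hEw1, hEw0, hE'inv, hτdef]
    have h1 : (1:ℝ) + E ≠ 0 := by positivity
    have h2 : (1:ℝ) + E⁻¹ ≠ 0 := by positivity
    field_simp
    ring
  -- pick θ > θs with slope close to τ
  have hslope := hasDerivAt_iff_tendsto_slope.1 hGderiv
  have hsub : Set.Ioi θs ⊆ {θs}ᶜ := fun x hx => ne_of_gt hx
  have h2 : Tendsto (slope G θs) (𝓝[>] θs) (𝓝 τ) :=
    hslope.mono_left (nhdsWithin_mono _ hsub)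
  have h3 : ∀ᶠ θ in 𝓝[>] θs, τ - ε < slope G θs θ :=
    h2.eventually (eventually_gt_nhds (by linarith))
  obtain ⟨θ, hθslope, hθmem⟩ := (h3.and self_mem_nhdsWithin).exists
  have hθgt : θs < θ := hθmem
  set sθ := Real.exp θ with hsθdef
  have hss : s' < sθ := Real.exp_lt_exp.2 hθgt
  -- the vectors
  set x := fun k => (if k = i0 then (1:ℝ) else 0) + sθ * (if k = j0 then 1 else 0) with hxdef
  set y := fun k => (if k = i0 then (1:ℝ) else 0) + s' * (if k = j0 then 1 else 0) with hydef
  have hsθpos : 0 < sθ := Real.exp_pos _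
  have hxnn : ∀ k, 0 ≤ x k := by
    intro k
    rw [hxdef]
    by_cases h1 : k = i0 <;> by_cases h2 : k = j0 <;> simp [h1, h2] <;> positivity
  have hynn : ∀ k, 0 ≤ y k := by
    intro k
    rw [hydef]
    by_cases h1 : k = i0 <;> by_cases h2 : k = j0 <;> simp [h1, h2] <;> positivity
  have hxi0 : x i0 = 1 := by rw [hxdef]; simp [hij]
  have hyi0 : y i0 = 1 := by rw [hydef]; simp [hij]
  have hxne : x ≠ 0 := by
    intro h
    have := congrFun h i0
    rw [hxi0] at this
    simp at this
  have hyne : y ≠ 0 := by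
    intro h
    have := congrFun h i0
    rw [hyi0] at this
    simp at this
  -- distance between x and y
  have hbdist : hilbertDist x y = ((Real.log (sθ/s') : ℝ) : EReal) := by
    rw [hxdef, hydef]
    exact two_point_dist i0 j0 hij sθ s' hs' hss
  have hlogss : Real.log (sθ/s') = θ - θs := by
    rw [hsθdef, hs'def, ← Real.exp_sub, Real.log_exp]
  have hbpos : 0 < hilbertDist x y := by
    rw [hbdist, hlogss]
    exact_mod_cast sub_pos.2 hθgt
  have hbne : hilbertDist x y ≠ ⊤ := by rw [hbdist]; exact EReal.coe_ne_top _
  -- distance between images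
  have hAx : ∀ r, A.mulVec x r = A r i0 + sθ * A r j0 := by
    intro r
    rw [hxdef]
    exact mulVec_two_point i0 j0 hij sθ r
  have hAy : ∀ r, A.mulVec y r = A r i0 + s' * A r j0 := by
    intro r
    rw [hydef]
    exact mulVec_two_point i0 j0 hij s' r
  have hsuppax : ∀ r, 0 < A.mulVec x r ↔ 0 < A r i0 := by
    intro r
    rw [hAx r]
    constructor
    · intro h
      by_contra hc
      have h1 : A r i0 = 0 := le_antisymm (not_lt.1 hc) (hnn r i0)
      have h2 : A r j0 = 0 := by
        by_contra hc2
        exact hc ((hsuppc r).2 (lt_of_le_of_ne (hnn r j0) (Ne.symm hc2)))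
      rw [h1, h2] at h
      simp at h
    · intro h
      have := mul_nonneg hsθpos.le (hnn r j0)
      linarith
  have hsuppay : ∀ r, 0 < A.mulVec y r ↔ 0 < A r i0 := by
    intro r
    rw [hAy r]
    constructor
    · intro h
      by_contra hc
      have h1 : A r i0 = 0 := le_antisymm (not_lt.1 hc) (hnn r i0)
      have h2 : A r j0 = 0 := by
        by_contra hc2
        exact hc ((hsuppc r).2 (lt_of_le_of_ne (hnn r j0) (Ne.symm hc2)))
      rw [h1, h2] at h
      simp at h
    · intro h
      have := mul_nonneg hs'.le (hnn r j0)
      linarith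
  have hsupp2 : ∀ r, 0 < A.mulVec x r ↔ 0 < A.mulVec y r := by
    intro r
    rw [hsuppax r, hsuppay r]
  have hS3 : R = Finset.univ.filter fun r => 0 < A.mulVec x r := by
    ext r
    rw [hmemR r]
    simp [hsuppax r]
  have hda := hilbertDist_eq (mulVec_nonneg A hnn hxnn) (mulVec_nonneg A hnn hynn)
    hsupp2 R hS3 hRne
  -- ratio values
  have hratio : ∀ r ∈ R, A.mulVec x r / A.mulVec y r = (1 + sθ * w r)/(1 + s' * w r) := by
    intro r hr
    obtain ⟨h1, _⟩ := hposR r hr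
    rw [hAx r, hAy r, hw]
    rw [div_eq_div_iff (by nlinarith [mul_nonneg hs'.le (hnn r j0)])
      (by
        have hwr : 0 ≤ A r j0 / A r i0 := div_nonneg (hnn r j0) h1.le
        nlinarith [mul_nonneg hs'.le hwr])]
    field_simp
    try ring
  obtain ⟨r1, hr1R, hr1⟩ := Finset.exists_mem_eq_sup' hRne w
  obtain ⟨r0, hr0R, hr0⟩ := Finset.exists_mem_eq_inf' hRne w
  have hsupratio : R.sup' hRne (fun r => A.mulVec x r / A.mulVec y r)
      = (1 + sθ * w1)/(1 + s' * w1) := by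
    apply le_antisymm
    · apply Finset.sup'_le
      intro r hr
      rw [hratio r hr]
      exact ratio_mono sθ s' (w r) w1 hs' hss.le
        (le_of_lt (by obtain ⟨h1, h2⟩ := hposR r hr; rw [hw]; positivity))
        (hwbound r hr).2
    · have heq : A.mulVec x r1 / A.mulVec y r1 = (1 + sθ * w1)/(1 + s' * w1) := by
        rw [hratio r1 hr1R, hw1def, hr1]
      rw [← heq]
      exact Finset.le_sup' (fun r => A.mulVec x r / A.mulVec y r) hr1R
  have hinfratio : R.inf' hRne (fun r => A.mulVec x r / A.mulVec y r)
      = (1 + sθ * w0)/(1 + s' * w0) := by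
    apply le_antisymm
    · have heq : A.mulVec x r0 / A.mulVec y r0 = (1 + sθ * w0)/(1 + s' * w0) := by
        rw [hratio r0 hr0R, hw0def, hr0]
      rw [← heq]
      exact Finset.inf'_le (fun r => A.mulVec x r / A.mulVec y r) hr0R
    · apply Finset.le_inf'
      intro r hr
      rw [hratio r hr]
      exact ratio_mono sθ s' w0 (w r) hs' hss.le hw0pos.le (hwbound r hr).1
  have hadist : hilbertDist (A.mulVec x) (A.mulVec y)
      = ((G θ - G θs : ℝ) : EReal) := by
    rw [hda, hsupratio, hinfratio]
    have hp1 : (0:ℝ) < 1 + sθ * w1 := by positivity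
    have hp2 : (0:ℝ) < 1 + s' * w1 := by positivity
    have hp3 : (0:ℝ) < 1 + sθ * w0 := by positivity
    have hp4 : (0:ℝ) < 1 + s' * w0 := by positivity
    have hreal : Real.log ((1 + sθ*w1)/(1 + s'*w1)) - Real.log ((1 + sθ*w0)/(1 + s'*w0))
        = G θ - G θs := by
      rw [Real.log_div (ne_of_gt hp1) (ne_of_gt hp2),
        Real.log_div (ne_of_gt hp3) (ne_of_gt hp4), hG]
      simp only
      rw [← hsθdef, ← hs'def]
      ring
    rw [hreal]
  have hane : hilbertDist (A.mulVec x) (A.mulVec y) ≠ ⊤ := by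
    rw [hadist]; exact EReal.coe_ne_top _
  refine ⟨x, y, hxnn, hxne, hynn, hyne, hbpos, hbne, hane, ?_⟩
  rw [hadist, hbdist, EReal.toReal_coe, EReal.toReal_coe, hlogss]
  have hslope_eq : slope G θs θ = (G θ - G θs)/(θ - θs) := slope_def_field G θs θ
  rw [hslope_eq] at hθslope
  have hθθs : 0 < θ - θs := sub_pos.2 hθgt
  calc (τ - ε) * (θ - θs) ≤ ((G θ - G θs)/(θ - θs)) * (θ - θs) := by
        apply mul_le_mul_of_nonneg_right _ hθθs.le
        linarith
    _ = G θ - G θs := by field_simp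

end lower2

section final

open Matrix

lemma tanh_quarter (D : ℝ) :
    Real.tanh (D/4) = (Real.exp (D/2) - 1)/(Real.exp (D/2) + 1) := by
  rw [Real.tanh_eq_sinh_div_cosh, Real.sinh_eq, Real.cosh_eq]
  have ha : 0 < Real.exp (D/4) := Real.exp_pos _
  have hb : 0 < Real.exp (-(D/4)) := Real.exp_pos _
  have h2 : Real.exp (D/2) = Real.exp (D/4) * Real.exp (D/4) := by
    rw [← Real.exp_add]; ring_nf
  have hinv : Real.exp (-(D/4)) = (Real.exp (D/4))⁻¹ := by
    rw [← Real.exp_neg]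
  rw [h2, hinv]
  have h3 : 0 < Real.exp (D/4) * Real.exp (D/4) + 1 := by positivity
  field_simp
  try ring

lemma ereal_toReal_pos {b : EReal} (hb : 0 < b) (hbt : b ≠ ⊤) : 0 < b.toReal := by
  have hbb : b ≠ ⊥ := ne_bot_of_gt hb
  rw [← EReal.coe_toReal hbt hbb] at hb
  exact_mod_cast hb

lemma mulVec_indicator {p : ℕ} (A : Matrix (Fin p) (Fin p) ℝ) (i : Fin p) :
    A.mulVec (fun k => if k = i then (1:ℝ) else 0) = fun r => A r i := by
  funext r
  rw [mulVec_apply']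
  have : ∀ k, A r k * (if k = i then (1:ℝ) else 0) = if k = i then A r k else 0 := by
    intro k
    by_cases h : k = i <;> simp [h]
  rw [Finset.sum_congr rfl fun k _ => this k, Finset.sum_ite_eq' Finset.univ i fun k => A r k]
  simp



/-- **Birkhoff's theorem for nonnegative matrices.** For a nonnegative `p×p`
matrix `A` with no zero column, `τ(A) = tanh(φ(A)/4)` (with `tanh(∞/4)` read as `1`); in
particular `τ(A) < 1` iff every row of `A` is strictly positive or identically zero. -/
theorem statement15 {p : ℕ} (hp : 2 ≤ p) (A : Matrix (Fin p) (Fin p) ℝ)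
    (hnn : ∀ i j, 0 ≤ A i j) (hcol : ∀ j, ∃ i, 0 < A i j) :
    birkhoffCoeff A =
      (if birkhoffPhi A = ⊤ then 1
       else ENNReal.ofReal (Real.tanh ((birkhoffPhi A).toReal / 4))) ∧
    (birkhoffCoeff A < 1 ↔ RowsPosOrZero A) := by
  have hp0 : 0 < p := by omega
  have hmain : birkhoffCoeff A =
      (if birkhoffPhi A = ⊤ then 1
       else ENNReal.ofReal (Real.tanh ((birkhoffPhi A).toReal / 4))) := by
    by_cases hphi : birkhoffPhi A = ⊤
    · rw [if_pos hphi]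
      apply le_antisymm
      · -- all ratios are at most 1
        apply sSup_le
        rintro r ⟨x, y, hx, hxne, hy, hyne, hb, hr⟩
        have hcontr := contraction A hnn hx hy
        have ha0 : 0 ≤ hilbertDist (A.mulVec x) (A.mulVec y) :=
          hilbertDist_nonneg (mulVec_nonneg A hnn hx) (mulVec_ne_zero A hnn hcol hx hxne)
            (mulVec_nonneg A hnn hy) (mulVec_ne_zero A hnn hcol hy hyne)
        rw [hr, eratio]
        by_cases hbt : hilbertDist x y = ⊤
        · rw [if_pos hbt]
          split <;> simp
        · rw [if_neg hbt]
          have hat : hilbertDist (A.mulVec x) (A.mulVec y) ≠ ⊤ :=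
            fun h => hbt (top_le_iff.1 (h ▸ hcontr))
          rw [if_neg hat]
          rw [ENNReal.ofReal_le_one]
          have hbpos : 0 < (hilbertDist x y).toReal := ereal_toReal_pos hb hbt
          have hab : (hilbertDist (A.mulVec x) (A.mulVec y)).toReal
              ≤ (hilbertDist x y).toReal :=
            EReal.toReal_le_toReal hcontr (ne_bot_of_le_ne_bot (by simp) ha0) hbt
          rw [div_le_one hbpos]
          exact hab
      · -- the ratio 1 is attained
        obtain ⟨i, j, hat⟩ := phi_attained (A := A) hp0
        rw [hphi] at hat
        have hij : i ≠ j := by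
          intro h
          subst h
          have hsuppi : ∀ r, 0 < A r i ↔ 0 < A r i := fun r => Iff.rfl
          obtain ⟨r0, hr0⟩ := hcol i
          have hne : (Finset.univ.filter fun r => 0 < A r i).Nonempty := ⟨r0, by simp [hr0]⟩
          have := hilbertDist_eq (fun r => hnn r i) (fun r => hnn r i) hsuppi _ rfl hne
          rw [this] at hat
          exact EReal.coe_ne_top _ hat.symm
        set x := fun k => if k = i then (1:ℝ) else 0 with hxdef
        set y := fun k => if k = j then (1:ℝ) else 0 with hydef
        have hxnn : ∀ k, 0 ≤ x k := by
          intro k; rw [hxdef]; by_cases h : k = i <;> simp [h]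
        have hynn : ∀ k, 0 ≤ y k := by
          intro k; rw [hydef]; by_cases h : k = j <;> simp [h]
        have hxne : x ≠ 0 := by
          intro h
          have := congrFun h i
          rw [hxdef] at this
          simp at this
        have hyne : y ≠ 0 := by
          intro h
          have := congrFun h j
          rw [hydef] at this
          simp at this
        have hdxy : hilbertDist x y = ⊤ := by
          apply hilbertDist_top hxnn hxne hynn hyne
          refine ⟨i, Or.inl ⟨by rw [hxdef]; simp, ?_⟩⟩
          rw [hydef]
          simp [hij]
        have hAx : A.mulVec x = fun r => A r i := by rw [hxdef]; exact mulVec_indicator A i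
        have hAy : A.mulVec y = fun r => A r j := by rw [hydef]; exact mulVec_indicator A j
        have hmem : (1 : ℝ≥0∞) ∈ {r : ℝ≥0∞ | ∃ x y : Fin p → ℝ,
            (∀ i, 0 ≤ x i) ∧ x ≠ 0 ∧ (∀ i, 0 ≤ y i) ∧ y ≠ 0 ∧ 0 < hilbertDist x y ∧
            r = eratio (hilbertDist (A.mulVec x) (A.mulVec y)) (hilbertDist x y)} := by
          refine ⟨x, y, hxnn, hxne, hynn, hyne, by rw [hdxy]; exact EReal.zero_lt_top, ?_⟩
          rw [hAx, hAy, ← hat, hdxy, eratio]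
          simp
        exact le_sSup hmem
    · rw [if_neg hphi]
      have hrows := rows_of_phi_ne_top hnn hcol hphi
      have hphib : birkhoffPhi A ≠ ⊥ := by
        intro h
        have := phi_nonneg (A := A) hp0 hnn hcol
        rw [h] at this
        simp at this
      set D := (birkhoffPhi A).toReal with hDdef
      have hD0 : 0 ≤ D := by
        have h1 := phi_nonneg (A := A) hp0 hnn hcol
        rw [← EReal.coe_toReal hphi hphib] at h1
        exact_mod_cast h1
      set E := Real.exp (D/2) with hEdef
      have hE1 : 1 ≤ E := Real.one_le_exp (by linarith)
      rw [tanh_quarter, ← hEdef]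
      set τ := (E - 1)/(E + 1) with hτdef
      apply le_antisymm
      · apply sSup_le
        rintro r ⟨x, y, hx, hxne, hy, hyne, hb, hr⟩
        rw [hr, eratio]
        by_cases hbt : hilbertDist x y = ⊤
        · rw [if_pos hbt]
          have hat := dist_mulVec_ne_top hnn hcol hrows hx hxne hy hyne
          rw [if_neg hat]
          exact zero_le
        · rw [if_neg hbt]
          have hcontr := contraction A hnn hx hy
          have hat : hilbertDist (A.mulVec x) (A.mulVec y) ≠ ⊤ :=
            fun h => hbt (top_le_iff.1 (h ▸ hcontr))
          rw [if_neg hat]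
          apply ENNReal.ofReal_le_ofReal
          have hq := key_quant hp0 hnn hcol hphi hx hxne hy hyne hbt
          have hbpos : 0 < (hilbertDist x y).toReal := ereal_toReal_pos hb hbt
          rw [div_le_iff₀ hbpos]
          rw [← hDdef, ← hEdef, ← hτdef] at hq
          linarith
      · rcases eq_or_lt_of_le hD0 with hD | hDpos
        · have : τ = 0 := by rw [hτdef, hEdef, ← hD]; simp
          rw [this]
          simp
        · apply le_of_forall_lt
          intro c hc
          have hcne : c ≠ ⊤ := fun h => by rw [h] at hc; exact absurd hc (not_lt.2 le_top)
          have hct : c.toReal < τ := (ENNReal.lt_ofReal_iff_toReal_lt hcne).1 hc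
          set ε := (τ - c.toReal)/2 with hε
          have hεpos : 0 < ε := by rw [hε]; linarith
          obtain ⟨x, y, hxnn, hxne, hynn, hyne, hbpos, hbne, hane, hineq⟩ :=
            key_lower hp0 hnn hcol hphi hDpos ε hεpos
          rw [← hDdef, ← hEdef, ← hτdef] at hineq
          have hbrpos : 0 < (hilbertDist x y).toReal := ereal_toReal_pos hbpos hbne
          have hmem : eratio (hilbertDist (A.mulVec x) (A.mulVec y)) (hilbertDist x y)
              ∈ {r : ℝ≥0∞ | ∃ x y : Fin p → ℝ,
              (∀ i, 0 ≤ x i) ∧ x ≠ 0 ∧ (∀ i, 0 ≤ y i) ∧ y ≠ 0 ∧ 0 < hilbertDist x y ∧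
              r = eratio (hilbertDist (A.mulVec x) (A.mulVec y)) (hilbertDist x y)} :=
            ⟨x, y, hxnn, hxne, hynn, hyne, hbpos, rfl⟩
          refine lt_of_lt_of_le (lt_of_lt_of_le ?_ (le_sSup hmem)) (le_refl _)
          rw [eratio, if_neg hbne, if_neg hane]
          rw [ENNReal.lt_ofReal_iff_toReal_lt hcne]
          have h1 : τ - ε ≤ (hilbertDist (A.mulVec x) (A.mulVec y)).toReal
              / (hilbertDist x y).toReal := by
            rw [le_div_iff₀ hbrpos]
            linarith
          have h2 : c.toReal < τ - ε := by rw [hε]; linarith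
          linarith
  refine ⟨hmain, ?_⟩
  rw [hmain]
  by_cases hphi : birkhoffPhi A = ⊤
  · rw [if_pos hphi]
    constructor
    · intro h
      exact absurd h (lt_irrefl 1)
    · intro h
      exact absurd hphi (phi_ne_top_of_rows hp0 hnn hcol h)
  · rw [if_neg hphi]
    constructor
    · intro _
      exact rows_of_phi_ne_top hnn hcol hphi
    · intro _
      rw [ENNReal.ofReal_lt_one]
      rw [tanh_quarter]
      have hE : 0 < Real.exp ((birkhoffPhi A).toReal/2) := Real.exp_pos _
      rw [div_lt_one (by linarith)]
      linarith
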